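/- Let φ ∈ (0, π/2], t = tan(φ/2), v_xy > 0 and v_z = t·v_xy. For every d = (d_x, d_y, d_z) ∈ ℝ³, the visibility-constrained planning heuristic dominates the Euclidean distance: h(d) ≥ √(d_x² + d_y² + d_z²), with equality if and only if |d_z| ≤ t·√(d_x² + d_y²). -/
import Mathlib


/-- The visibility-constrained planning heuristic `h(d)` for sensor slope
parameter `t = tan(φ/2)` and voxel dimensions `v_xy`, `v_z`. -/
noncomputable def heur (t vxy vz dx dy dz : ℝ) : ℝ :=
  Real.sqrt (dx ^ 2 + dy ^ 2 + (min |dz| (t * Real.sqrt (dx ^ 2 + dy ^ 2))) ^ 2) +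
    max 0 (|dz| - min |dz| (t * Real.sqrt (dx ^ 2 + dy ^ 2))) / vz *
      Real.sqrt (vxy ^ 2 + vz ^ 2)

theorem stmt_3 (φ t vxy vz : ℝ) (hφ0 : 0 < φ) (hφ1 : φ ≤ Real.pi / 2)
    (ht : t = Real.tan (φ / 2)) (hvxy : 0 < vxy) (hvz : vz = t * vxy)
    (dx dy dz : ℝ) :
    heur t vxy vz dx dy dz ≥ Real.sqrt (dx ^ 2 + dy ^ 2 + dz ^ 2) ∧
    (heur t vxy vz dx dy dz = Real.sqrt (dx ^ 2 + dy ^ 2 + dz ^ 2) ↔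
      |dz| ≤ t * Real.sqrt (dx ^ 2 + dy ^ 2)) := by
  have ht0 : 0 < t := by
    rw [ht]
    apply Real.tan_pos_of_pos_of_lt_pi_div_two
    · linarith
    · nlinarith [Real.pi_pos]
  set ρ := Real.sqrt (dx ^ 2 + dy ^ 2) with hρdef
  have hρ0 : 0 ≤ ρ := Real.sqrt_nonneg _
  have hρ2 : ρ ^ 2 = dx ^ 2 + dy ^ 2 := Real.sq_sqrt (by positivity)
  have hs0 : 0 < Real.sqrt (1 + t ^ 2) := Real.sqrt_pos.mpr (by positivity)
  have hs2 : Real.sqrt (1 + t ^ 2) ^ 2 = 1 + t ^ 2 := Real.sq_sqrt (by positivity)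
  by_cases hc : |dz| ≤ t * ρ
  · have hmin : min |dz| (t * ρ) = |dz| := min_eq_left hc
    have heq : heur t vxy vz dx dy dz = Real.sqrt (dx ^ 2 + dy ^ 2 + dz ^ 2) := by
      unfold heur
      rw [← hρdef, hmin, sub_self, max_self, zero_div, zero_mul, add_zero, sq_abs]
    exact ⟨le_of_eq heq.symm, by simp [heq, hc]⟩
  · push_neg at hc
    have hdz0 : 0 < |dz| := lt_of_le_of_lt (by positivity) hc
    have hmin : min |dz| (t * ρ) = t * ρ := min_eq_right hc.le
    have hvz0 : 0 < vz := by rw [hvz]; positivity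
    set s := Real.sqrt (1 + t ^ 2) with hsdef
    have h1 : Real.sqrt (dx ^ 2 + dy ^ 2 + (t * ρ) ^ 2) = ρ * s := by
      rw [show dx ^ 2 + dy ^ 2 + (t * ρ) ^ 2 = (ρ * s) ^ 2 by
        nlinarith [hs2, hρ2]]
      exact Real.sqrt_sq (by positivity)
    have h2 : Real.sqrt (vxy ^ 2 + vz ^ 2) = vxy * s := by
      rw [show vxy ^ 2 + vz ^ 2 = (vxy * s) ^ 2 by
        rw [mul_pow, hs2, hvz]; ring]
      exact Real.sqrt_sq (by positivity)
    have hmax : max 0 (|dz| - t * ρ) = |dz| - t * ρ :=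
      max_eq_right (by linarith)
    have heq : heur t vxy vz dx dy dz = s * |dz| / t := by
      unfold heur
      rw [← hρdef, hmin, h1, h2, hmax, hvz]
      field_simp
      ring
    have hgt : Real.sqrt (dx ^ 2 + dy ^ 2 + dz ^ 2) < heur t vxy vz dx dy dz := by
      rw [heq]
      have hpos : 0 < s * |dz| / t := by positivity
      rw [show Real.sqrt (dx ^ 2 + dy ^ 2 + dz ^ 2) < s * |dz| / t ↔
          dx ^ 2 + dy ^ 2 + dz ^ 2 < (s * |dz| / t) ^ 2 from
        Real.sqrt_lt' hpos]
      have hdz2 : t ^ 2 * ρ ^ 2 < dz ^ 2 := by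
        have h2 := mul_lt_mul'' hc hc (by positivity) (by positivity)
        nlinarith [sq_abs dz]
      rw [div_pow, mul_pow, hs2, sq_abs, lt_div_iff₀ (by positivity)]
      nlinarith
    constructor
    · exact hgt.le
    · constructor
      · intro h; exact absurd (h ▸ hgt) (lt_irrefl _)
      · intro h; exact absurd h (not_le.mpr hc)
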